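/- Let b ∈ ℂ with b ≠ 0 and let i denote the imaginary unit. Let T_{(b₀,b₁,b₂,c)}(x,y) = ((cx−y)/(b₂y(b₀cx−y)), cx(b₀(cx−y)−y(b₀cx−y))/(y((cx−y)−b₂y(b₀cx−y)))) denote the qP_III mapping with parameter action (b₀,b₁,b₂,c) ↦ (b₀/q, b₁q, b₂, c), q = (b₀b₁b₂)⁻¹, and let σ_{(b₁,b₂)}(x,y) = (b₁/x, 1/(b₂y)). Specialize (b₀,b₁,b₂,c) = (1/b, −1, b, i), so that q = −1 and one application of T changes the parameters to (−1/b, 1, b, i) while a second application restores them. Then for all (x,y) at which all denominators occurring are nonzero, σ_{(−1,b)} ∘ T_{(−1/b,1,b,i)} ∘ T_{(1/b,−1,b,i)} (x,y) = φ(x,y), where φ is the Case ii-2 mapping φ(x,y) = ( x(−ix(x+1)+y(bx+1))/(y(x(x−b)+iby(x−1))), x(x(x+1)+iby(x−1))/(b(x(x+1)−iy(x−1))) ). -/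

import Mathlib

open Complex

/-- The `qP_III` mapping `T_{(b₀,b₁,b₂,c)}` on the family of generalized
    Halphen surfaces of type `A₅⁽¹⁾` (the parameter `b₁` does not enter
    the formula; it only enters the accompanying parameter action
    `(b₀,b₁,b₂,c) ↦ (b₀/q, b₁q, b₂, c)`, `q = (b₀b₁b₂)⁻¹`). -/
noncomputable def qPIII (b₀ _b₁ b₂ c : ℂ) (p : ℂ × ℂ) : ℂ × ℂ :=
  ((c * p.1 - p.2) / (b₂ * p.2 * (b₀ * c * p.1 - p.2)),
   c * p.1 * (b₀ * (c * p.1 - p.2) - p.2 * (b₀ * c * p.1 - p.2)) /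
     (p.2 * ((c * p.1 - p.2) - b₂ * p.2 * (b₀ * c * p.1 - p.2))))

/-- The automorphism `σ_{(b₁,b₂)}(x,y) = (b₁/x, 1/(b₂y))`. -/
noncomputable def sigmaAut (b₁ b₂ : ℂ) (p : ℂ × ℂ) : ℂ × ℂ :=
  (b₁ / p.1, 1 / (b₂ * p.2))

/-- The Case ii-2 mapping `φ`. -/
noncomputable def phiII2 (b : ℂ) (p : ℂ × ℂ) : ℂ × ℂ :=
  (p.1 * (-Complex.I * p.1 * (p.1 + 1) + p.2 * (b * p.1 + 1)) /
     (p.2 * (p.1 * (p.1 - b) + Complex.I * b * p.2 * (p.1 - 1))),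
   p.1 * (p.1 * (p.1 + 1) + Complex.I * b * p.2 * (p.1 - 1)) /
     (b * (p.1 * (p.1 + 1) - Complex.I * p.2 * (p.1 - 1))))


private lemma I2 : Complex.I ^ 2 = -1 := Complex.I_sq
private lemma I3 : Complex.I ^ 3 = -Complex.I := by rw [pow_succ, I2]; ring
private lemma I4 : Complex.I ^ 4 = 1 := by rw [pow_succ, I3]; simp [Complex.I_mul_I]
private lemma I5 : Complex.I ^ 5 = Complex.I := by rw [pow_succ, I4]; ring
private lemma I6 : Complex.I ^ 6 = -1 := by rw [pow_succ, I5, Complex.I_mul_I]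
private lemma I7 : Complex.I ^ 7 = -Complex.I := by rw [pow_succ, I6]; ring
private lemma I8 : Complex.I ^ 8 = 1 := by rw [pow_succ, I7]; simp [Complex.I_mul_I]

private lemma ne_aux1 (b0 c A B C D : ℂ) (hB : B ≠ 0) (hD : D ≠ 0)
    (h : b0 * c * (A / B) - C / D ≠ 0) : b0 * c * A * D - C * B ≠ 0 := by
  intro h0; apply h
  rw [show b0 * c * (A / B) - C / D = (b0 * c * A * D - C * B) / (B * D) by
    field_simp, h0, zero_div]

private lemma ne_aux2 (b0 b2 c A B C D : ℂ) (hB : B ≠ 0) (hD : D ≠ 0)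
    (h : c * (A / B) - C / D - b2 * (C / D) * (b0 * c * (A / B) - C / D) ≠ 0) :
    D * (c * A * D - C * B) - b2 * C * (b0 * c * A * D - C * B) ≠ 0 := by
  intro h0; apply h
  rw [show c * (A / B) - C / D - b2 * (C / D) * (b0 * c * (A / B) - C / D)
      = (D * (c * A * D - C * B) - b2 * C * (b0 * c * A * D - C * B)) / (B * D ^ 2) by
    field_simp, h0, zero_div]

set_option maxHeartbeats 1600000 in
/-- `qPIII` applied to a pair of explicit fractions, flattened. -/
private lemma qPIII_frac (b0 b1 b2 c A B C D : ℂ) (hB : B ≠ 0) (hD : D ≠ 0)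
    (hC : C ≠ 0) (hb2 : b2 ≠ 0)
    (hE : b0 * c * A * D - C * B ≠ 0)
    (hF : D * (c * A * D - C * B) - b2 * C * (b0 * c * A * D - C * B) ≠ 0) :
    qPIII b0 b1 b2 c (A / B, C / D) =
      (D * (c * A * D - C * B) / (b2 * C * (b0 * c * A * D - C * B)),
       c * A * D * (b0 * D * (c * A * D - C * B) - C * (b0 * c * A * D - C * B)) /
         (B * C * (D * (c * A * D - C * B) - b2 * C * (b0 * c * A * D - C * B)))) := by
  unfold qPIII
  have key1 : b2 * (C / D) * (b0 * c * (A / B) - C / D) ≠ 0 := by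
    have h3 : b0 * c * (A / B) - C / D = (b0 * c * A * D - C * B) / (B * D) := by
      field_simp
    rw [h3]
    exact mul_ne_zero (mul_ne_zero hb2 (div_ne_zero hC hD))
      (div_ne_zero hE (mul_ne_zero hB hD))
  have key2 : C / D * (c * (A / B) - C / D - b2 * (C / D) * (b0 * c * (A / B) - C / D)) ≠ 0 := by
    have h3 : c * (A / B) - C / D - b2 * (C / D) * (b0 * c * (A / B) - C / D)
        = (D * (c * A * D - C * B) - b2 * C * (b0 * c * A * D - C * B)) / (B * D ^ 2) := by
      field_simp
    rw [h3]
    exact mul_ne_zero (div_ne_zero hC hD)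
      (div_ne_zero hF (mul_ne_zero hB (pow_ne_zero 2 hD)))
  have e1 : c * (A / B) - C / D = (c * A * D - C * B) / (B * D) := by
    field_simp
  have e2 : b0 * c * (A / B) - C / D = (b0 * c * A * D - C * B) / (B * D) := by
    field_simp
  have hBD : B * D ≠ 0 := mul_ne_zero hB hD
  have e3 : (c * A * D - C * B) / (B * D) - b2 * (C / D) * ((b0 * c * A * D - C * B) / (B * D))
      = (D * (c * A * D - C * B) - b2 * C * (b0 * c * A * D - C * B)) / (B * D ^ 2) := by
    field_simp
  refine Prod.ext ?_ ?_ <;> simp only <;> rw [e1, e2]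
  · rw [div_eq_div_iff
      (mul_ne_zero (mul_ne_zero hb2 (div_ne_zero hC hD)) (div_ne_zero hE hBD))
      (mul_ne_zero (mul_ne_zero hb2 hC) hE)]
    field_simp
  · rw [e3, div_eq_div_iff
      (mul_ne_zero (div_ne_zero hC hD)
        (div_ne_zero hF (mul_ne_zero hB (pow_ne_zero 2 hD))))
      (mul_ne_zero (mul_ne_zero hB hC) hF)]
    field_simp

set_option maxHeartbeats 3200000 in
theorem stmt_19 (b x y : ℂ) (hb : b ≠ 0)
    -- denominators of the first application `T_{(1/b,−1,b,i)}`: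
    (hd1 : b * y * ((1 / b) * Complex.I * x - y) ≠ 0)
    (hd2 : y * ((Complex.I * x - y) - b * y * ((1 / b) * Complex.I * x - y)) ≠ 0)
    -- denominators of the second application `T_{(−1/b,1,b,i)}`:
    (hd3 : b * (qPIII (1 / b) (-1) b Complex.I (x, y)).2 *
      ((-1 / b) * Complex.I * (qPIII (1 / b) (-1) b Complex.I (x, y)).1 -
        (qPIII (1 / b) (-1) b Complex.I (x, y)).2) ≠ 0)
    (hd4 : (qPIII (1 / b) (-1) b Complex.I (x, y)).2 *
      ((Complex.I * (qPIII (1 / b) (-1) b Complex.I (x, y)).1 -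
          (qPIII (1 / b) (-1) b Complex.I (x, y)).2) -
        b * (qPIII (1 / b) (-1) b Complex.I (x, y)).2 *
          ((-1 / b) * Complex.I * (qPIII (1 / b) (-1) b Complex.I (x, y)).1 -
            (qPIII (1 / b) (-1) b Complex.I (x, y)).2)) ≠ 0)
    -- denominators of `σ_{(−1,b)}`:
    (hd5 : (qPIII (-1 / b) 1 b Complex.I (qPIII (1 / b) (-1) b Complex.I (x, y))).1 ≠ 0)
    (hd6 : b * (qPIII (-1 / b) 1 b Complex.I (qPIII (1 / b) (-1) b Complex.I (x, y))).2 ≠ 0)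
    -- denominators of `φ`:
    (hd7 : y * (x * (x - b) + Complex.I * b * y * (x - 1)) ≠ 0)
    (hd8 : b * (x * (x + 1) - Complex.I * y * (x - 1)) ≠ 0) :
    sigmaAut (-1) b
        (qPIII (-1 / b) 1 b Complex.I (qPIII (1 / b) (-1) b Complex.I (x, y))) =
      phiII2 b (x, y) := by

  -- atomic nonzero facts
  obtain ⟨hby, ht1⟩ := mul_ne_zero_iff.mp hd1
  obtain ⟨hb', hy⟩ := mul_ne_zero_iff.mp hby
  obtain ⟨hy7, hC7⟩ := mul_ne_zero_iff.mp hd7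
  obtain ⟨hb8, hD8⟩ := mul_ne_zero_iff.mp hd8
  have hIxby : Complex.I * x - b * y ≠ 0 := by
    have : Complex.I * x - b * y = b * ((1 / b) * Complex.I * x - y) := by
      field_simp
    rw [this]; exact mul_ne_zero hb ht1
  -- Step 1: the first application simplifies drastically
  have h1 : qPIII (1 / b) (-1) b Complex.I (x, y) =
      ((Complex.I * x - y) / (y * (Complex.I * x - b * y)),
       Complex.I * x / (b * y)) := by
    unfold qPIII
    refine Prod.ext ?_ ?_ <;> simp only
    · rw [div_eq_div_iff hd1 (mul_ne_zero hy hIxby)]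
      field_simp
    · rw [div_eq_div_iff hd2 (mul_ne_zero hb hy)]
      field_simp
  rw [h1] at hd3 hd4 hd5 hd6 ⊢
  simp only at hd3 hd4
  -- denominators for the second application
  obtain ⟨hbY1, hE'⟩ := mul_ne_zero_iff.mp hd3
  obtain ⟨-, hY1⟩ := mul_ne_zero_iff.mp hbY1
  have hx : x ≠ 0 := by
    intro h; apply hY1; rw [h]; simp
  have hC1 : Complex.I * x ≠ 0 := mul_ne_zero Complex.I_ne_zero hx
  have hB1 : y * (Complex.I * x - b * y) ≠ 0 := mul_ne_zero hy hIxby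
  have hby' : b * y ≠ 0 := mul_ne_zero hb hy
  have hE : (-1 / b) * Complex.I * (Complex.I * x - y) * (b * y) -
      Complex.I * x * (y * (Complex.I * x - b * y)) ≠ 0 :=
    ne_aux1 (-1 / b) Complex.I (Complex.I * x - y) (y * (Complex.I * x - b * y))
      (Complex.I * x) (b * y) hB1 hby' hE'
  obtain ⟨-, hF'⟩ := mul_ne_zero_iff.mp hd4
  have hF : (b * y) * (Complex.I * (Complex.I * x - y) * (b * y) -
        Complex.I * x * (y * (Complex.I * x - b * y))) -
      b * (Complex.I * x) * ((-1 / b) * Complex.I * (Complex.I * x - y) * (b * y) -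
        Complex.I * x * (y * (Complex.I * x - b * y))) ≠ 0 :=
    ne_aux2 (-1 / b) b Complex.I (Complex.I * x - y) (y * (Complex.I * x - b * y))
      (Complex.I * x) (b * y) hB1 hby' hF'
  -- Step 2: flatten the second application
  have h2 := qPIII_frac (-1 / b) 1 b Complex.I (Complex.I * x - y)
      (y * (Complex.I * x - b * y)) (Complex.I * x) (b * y) hB1 hby' hC1 hb hE hF
  rw [h2] at hd5 hd6 ⊢
  simp only at hd5 hd6
  -- numerators of the flattened pair are nonzero
  have hN2 := (div_ne_zero_iff.mp hd5).1
  have hN4 := (div_ne_zero_iff.mp (mul_ne_zero_iff.mp hd6).2).1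
  -- sigma step
  unfold sigmaAut phiII2
  refine Prod.ext ?_ ?_ <;> simp only
  · rw [div_div_eq_mul_div, div_eq_div_iff hN2 hd7]
    field_simp [hb]
    ring_nf
    simp only [I2, I3, I4, I5, I6, I7, I8]
    ring
  · rw [← mul_div_assoc, one_div_div, div_eq_div_iff (mul_ne_zero hb hN4) hd8]
    field_simp [hb]
    ring_nf
    simp only [I2, I3, I4, I5, I6, I7, I8]
    ring
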